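/- arXiv:2207.08939 — 3 statements merged into one kernel-verified Lean document; each statement's English description precedes it below -/
import Mathlib

section
/- For the scalar denoising problem with y > 0 and ground truth x_t, the upper-level loss Q(w) = (x*(w) − x_t)² is differentiable at every w ∈ ℝ except at w ∈ {−y, 0, y}. -/
open Set Filter

lemma aux_nondiff (f g1 g2 : ℝ → ℝ) (w a b : ℝ)
    (h1 : f =ᶠ[nhdsWithin w (Iio w)] g1) (h2 : f =ᶠ[nhdsWithin w (Ioi w)] g2)
    (e1 : f w = g1 w) (e2 : f w = g2 w)
    (hg1 : HasDerivAt g1 a w) (hg2 : HasDerivAt g2 b w) (hab : a ≠ b) :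
    ¬ DifferentiableAt ℝ f w := by
  intro hd
  have hA : HasDerivWithinAt f a (Iio w) w :=
    (hg1.hasDerivWithinAt).congr_of_eventuallyEq h1 e1
  have hB : HasDerivWithinAt f b (Ioi w) w :=
    (hg2.hasDerivWithinAt).congr_of_eventuallyEq h2 e2
  have ha : a = deriv f w := by
    rw [← hA.derivWithin (uniqueDiffWithinAt_Iio w)]
    exact hd.derivWithin (uniqueDiffWithinAt_Iio w)
  have hb : b = deriv f w := by
    rw [← hB.derivWithin (uniqueDiffWithinAt_Ioi w)]
    exact hd.derivWithin (uniqueDiffWithinAt_Ioi w)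
  exact hab (ha.trans hb.symm)

lemma aux_hdA (y xt w : ℝ) : HasDerivAt (fun z => (y + z - xt)^2) (2*(y + w - xt)) w := by
  have h := (((hasDerivAt_id w).const_add y).sub_const xt).pow 2
  exact h.congr_deriv (by simp)

lemma aux_hdB (y xt w : ℝ) : HasDerivAt (fun z => (y - z - xt)^2) (-(2*(y - w - xt))) w := by
  have h := (((hasDerivAt_id w).const_sub y).sub_const xt).pow 2
  exact h.congr_deriv (by simp)

/-- For the scalar denoising problem with `y > 0` and ground truth `x_t` (with
`x_t ≠ y`, `x_t ≠ 0`), the upper-level loss `Q(w) = (x*(w) − x_t)²` is differentiable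
at every `w ∈ ℝ` except at `w ∈ {−y, 0, y}`. -/
theorem stmt_3 (y xt : ℝ) (hy : 0 < y) (hxt1 : xt ≠ y) (hxt2 : xt ≠ 0)
    (xstar : ℝ → ℝ) (hx : ∀ w, xstar w = if |w| ≤ y then y - |w| else 0)
    (Q : ℝ → ℝ) (hQ : ∀ w, Q w = (xstar w - xt)^2) :
    (∀ w : ℝ, w ∉ ({-y, 0, y} : Set ℝ) → DifferentiableAt ℝ Q w) ∧
    (∀ w : ℝ, w ∈ ({-y, 0, y} : Set ℝ) → ¬ DifferentiableAt ℝ Q w) := by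
  have hQ' : ∀ w : ℝ, Q w = ((if |w| ≤ y then y - |w| else 0) - xt)^2 := by
    intro w; rw [hQ w, hx w]
  have hneg : ∀ w ∈ Ioo (-y) 0, Q w = (y + w - xt)^2 := by
    intro w hw
    rw [hQ' w, abs_of_neg hw.2, if_pos (by linarith [hw.1])]
    ring_nf
  have hpos : ∀ w ∈ Ioo (0:ℝ) y, Q w = (y - w - xt)^2 := by
    intro w hw
    rw [hQ' w, abs_of_pos hw.1, if_pos (le_of_lt hw.2)]
  have hout : ∀ w : ℝ, y < |w| → Q w = xt^2 := by
    intro w hw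
    rw [hQ' w, if_neg (not_le.mpr hw)]
    ring
  constructor
  · intro w hw
    simp only [mem_insert_iff, mem_singleton_iff] at hw
    push_neg at hw
    obtain ⟨hw1, hw2, hw3⟩ := hw
    rcases lt_trichotomy w 0 with h0 | h0 | h0
    · rcases lt_trichotomy w (-y) with h1 | h1 | h1
      · have hev : Q =ᶠ[nhds w] fun _ => xt^2 := by
          filter_upwards [Iio_mem_nhds h1] with z hz
          simp only [mem_Iio] at hz
          exact hout z (by rw [abs_of_neg (by linarith)]; linarith)
        exact hev.differentiableAt_iff.mpr (differentiableAt_const _)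
      · exact absurd h1 hw1
      · have hev : Q =ᶠ[nhds w] fun z => (y + z - xt)^2 := by
          filter_upwards [Ioo_mem_nhds h1 h0] with z hz using hneg z hz
        exact hev.differentiableAt_iff.mpr (aux_hdA y xt w).differentiableAt
    · exact absurd h0 hw2
    · rcases lt_trichotomy w y with h1 | h1 | h1
      · have hev : Q =ᶠ[nhds w] fun z => (y - z - xt)^2 := by
          filter_upwards [Ioo_mem_nhds h0 h1] with z hz using hpos z hz
        exact hev.differentiableAt_iff.mpr (aux_hdB y xt w).differentiableAt
      · exact absurd h1 hw3
      · have hev : Q =ᶠ[nhds w] fun _ => xt^2 := by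
          filter_upwards [Ioi_mem_nhds h1] with z hz
          simp only [mem_Ioi] at hz
          exact hout z (by rw [abs_of_pos (by linarith)]; linarith)
        exact hev.differentiableAt_iff.mpr (differentiableAt_const _)
  · intro w hw
    simp only [mem_insert_iff, mem_singleton_iff] at hw
    rcases hw with h | h | h <;> rw [h]
    · -- w = -y
      apply aux_nondiff Q (fun _ => xt^2) (fun z => (y + z - xt)^2) (-y)
        0 (2*(y + -y - xt))
      · filter_upwards [self_mem_nhdsWithin] with z hz
        simp only [mem_Iio] at hz
        exact hout z (by rw [abs_of_neg (by linarith)]; linarith)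
      · filter_upwards [Ioo_mem_nhdsGT_of_mem (by constructor <;> [exact le_refl _; linarith] : -y ∈ Ico (-y) 0)] with z hz using hneg z hz
      · rw [hQ']; simp [abs_of_nonpos (by linarith : -y ≤ 0), le_refl]
      · rw [hQ']; simp [abs_of_nonpos (by linarith : -y ≤ 0), le_refl]
      · exact hasDerivAt_const _ _
      · exact aux_hdA y xt (-y)
      · intro h; apply hxt2; linarith [h]
    · -- w = 0
      apply aux_nondiff Q (fun z => (y + z - xt)^2) (fun z => (y - z - xt)^2) 0
        (2*(y + 0 - xt)) (-(2*(y - 0 - xt)))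
      · filter_upwards [Ioo_mem_nhdsLT_of_mem (by constructor <;> linarith : (0:ℝ) ∈ Ioc (-y) 0)] with z hz using hneg z hz
      · filter_upwards [Ioo_mem_nhdsGT_of_mem (by constructor <;> [exact le_refl _; linarith] : (0:ℝ) ∈ Ico 0 y)] with z hz using hpos z hz
      · rw [hQ']; simp [le_of_lt hy]
      · rw [hQ']; simp [le_of_lt hy]
      · exact aux_hdA y xt 0
      · exact aux_hdB y xt 0
      · intro h; apply hxt1; linarith [h]
    · -- w = y
      apply aux_nondiff Q (fun z => (y - z - xt)^2) (fun _ => xt^2) y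
        (-(2*(y - y - xt))) 0
      · filter_upwards [Ioo_mem_nhdsLT_of_mem (by constructor <;> [exact hy; exact le_refl _] : y ∈ Ioc 0 y)] with z hz using hpos z hz
      · filter_upwards [self_mem_nhdsWithin] with z hz
        simp only [mem_Ioi] at hz
        exact hout z (by rw [abs_of_pos (by linarith)]; linarith)
      · rw [hQ']; simp [abs_of_pos hy, le_refl]
      · rw [hQ']; simp [abs_of_pos hy, le_refl]
      · exact aux_hdB y xt y
      · exact hasDerivAt_const _ _
      · intro h; apply hxt2; linarith [h]
end

section
/- Let x* be the unique minimizer of (1/2)‖x − y‖₂² + ‖Wx‖₁, let W₀ collect the rows wᵢ of W with wᵢᵀ x* = 0 and W± the rows with wᵢᵀ x* ≠ 0, with s = sign(W± x*). If W₀ has full row rank, then x* = (I − W₀ᵀ(W₀W₀ᵀ)⁻¹W₀)(y − W±ᵀ s). -/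
open Matrix

lemma aux_isUnit {m : Type*} [Fintype m] [DecidableEq m] (M : Matrix m m ℝ)
    (h : M.rank = Fintype.card m) : IsUnit M.det := by
  rw [← Matrix.isUnit_iff_isUnit_det, ← Matrix.mulVec_surjective_iff_isUnit]
  have : LinearMap.range M.mulVecLin = ⊤ := by
    apply Submodule.eq_top_of_finrank_eq
    rw [← Matrix.rank, h, Module.finrank_fintype_fun_eq_card]
  intro v
  exact (LinearMap.range_eq_top.mp this) v

open Classical in
lemma aux_abs (a b t : ℝ) (ht : 0 < t) (h : a ≠ 0 → t * |b| < |a|) :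
    |a + t * b| = |a| + t * (if a = 0 then |b| else Real.sign a * b) := by
  by_cases ha : a = 0
  · simp [ha, abs_mul, abs_of_pos ht]
  · simp only [ha, if_false]
    have hb := h ha
    have h1 : t * b ≤ t * |b| := by nlinarith [le_abs_self b]
    have h2 : -(t * |b|) ≤ t * b := by nlinarith [neg_abs_le b]
    rcases lt_or_gt_of_ne ha with hlt | hgt
    · rw [abs_of_neg hlt] at hb ⊢
      rw [Real.sign_of_neg hlt, abs_of_neg (by linarith)]
      ring
    · rw [abs_of_pos hgt] at hb ⊢
      rw [Real.sign_of_pos hgt, abs_of_pos (by linarith)]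
      ring

lemma aux_exists_pos {ι : Type*} [Fintype ι] (c : ι → ℝ) (hc : ∀ i, 0 < c i) :
    ∃ t, 0 < t ∧ ∀ i, t ≤ c i := by
  cases isEmpty_or_nonempty ι with
  | inl h => exact ⟨1, one_pos, fun i => (h.false i).elim⟩
  | inr h =>
    refine ⟨Finset.univ.inf' Finset.univ_nonempty c, ?_,
      fun i => Finset.inf'_le c (Finset.mem_univ i)⟩
    rw [Finset.lt_inf'_iff]
    exact fun i _ => hc i

open Classical in
/-- Let `x*` be the unique minimizer of `(1/2)‖x − y‖₂² + ‖Wx‖₁`, let `W₀` collect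
the rows `wᵢ` of `W` with `wᵢᵀ x* = 0` and `W±` the rows with `wᵢᵀ x* ≠ 0`, and let
`s = sign(W± x*)`. If `W₀` has full row rank, then
`x* = (I − W₀ᵀ(W₀W₀ᵀ)⁻¹W₀)(y − W±ᵀ s)`. -/
theorem stmt_10 (n k : ℕ) (y : Fin n → ℝ) (W : Matrix (Fin k) (Fin n) ℝ)
    (xstar : Fin n → ℝ)
    (hmin : ∀ x : Fin n → ℝ,
      (1/2) * ∑ i, (xstar i - y i)^2 + ∑ j, |W.mulVec xstar j| ≤
      (1/2) * ∑ i, (x i - y i)^2 + ∑ j, |W.mulVec x j|)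
    (W₀ : Matrix {j : Fin k // W.mulVec xstar j = 0} (Fin n) ℝ)
    (hW₀ : ∀ j i, W₀ j i = W j.1 i)
    (Wpm : Matrix {j : Fin k // W.mulVec xstar j ≠ 0} (Fin n) ℝ)
    (hWpm : ∀ j i, Wpm j i = W j.1 i)
    (s : {j : Fin k // W.mulVec xstar j ≠ 0} → ℝ)
    (hs : ∀ j, s j = Real.sign (W.mulVec xstar j.1))
    (hrank : W₀.rank = Fintype.card {j : Fin k // W.mulVec xstar j = 0}) :
    xstar = (1 - W₀ᵀ * (W₀ * W₀ᵀ)⁻¹ * W₀).mulVec (y - Wpmᵀ.mulVec s) := by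
  classical
  have hMdet : IsUnit (W₀ * W₀ᵀ).det := by
    apply aux_isUnit
    rw [Matrix.rank_self_mul_transpose, hrank]
  set M : Matrix _ _ ℝ := W₀ * W₀ᵀ with hM
  set B : Matrix (Fin n) (Fin n) ℝ := W₀ᵀ * M⁻¹ * W₀ with hB
  set P : Matrix (Fin n) (Fin n) ℝ := 1 - B with hP
  have hMM' : M * M⁻¹ = 1 := Matrix.mul_nonsing_inv M hMdet
  have hMT : Mᵀ = M := by rw [hM, Matrix.transpose_mul, Matrix.transpose_transpose]
  have hW₀B : W₀ * B = W₀ := by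
    rw [hB]
    calc W₀ * (W₀ᵀ * M⁻¹ * W₀) = (W₀ * W₀ᵀ) * M⁻¹ * W₀ := by
          simp only [Matrix.mul_assoc]
      _ = W₀ := by rw [← hM, hMM', Matrix.one_mul]
  have hBB : B * B = B := by
    calc B * B = W₀ᵀ * M⁻¹ * (W₀ * B) := by rw [hB]; simp only [Matrix.mul_assoc]
      _ = B := by rw [hW₀B, hB]
  have hBT : Bᵀ = B := by
    rw [hB, Matrix.transpose_mul, Matrix.transpose_mul, Matrix.transpose_transpose,
      Matrix.transpose_nonsing_inv, hMT]
    simp only [Matrix.mul_assoc]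
  have hPT : Pᵀ = P := by rw [hP, Matrix.transpose_sub, Matrix.transpose_one, hBT]
  have hPP : P * P = P := by
    have h1 : (1 - B) * (1 - B) = 1 - B - B + B * B := by noncomm_ring
    rw [hP, h1, hBB]; abel
  have hW₀P : W₀ * P = 0 := by rw [hP, Matrix.mul_sub, Matrix.mul_one, hW₀B, sub_self]
  have hW₀v : ∀ (v : Fin n → ℝ) j, W₀.mulVec v j = W.mulVec v j.1 := by
    intro v j
    simp only [Matrix.mulVec, dotProduct]
    exact Finset.sum_congr rfl fun i _ => by rw [hW₀]
  have hWpmv : ∀ (v : Fin n → ℝ) j, Wpm.mulVec v j = W.mulVec v j.1 := by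
    intro v j
    simp only [Matrix.mulVec, dotProduct]
    exact Finset.sum_congr rfl fun i _ => by rw [hWpm]
  have hx0 : W₀.mulVec xstar = 0 := funext fun j => (hW₀v xstar j).trans j.2
  have hPx : P.mulVec xstar = xstar := by
    rw [hP, Matrix.sub_mulVec, Matrix.one_mulVec, hB, ← Matrix.mulVec_mulVec, hx0,
      Matrix.mulVec_zero, sub_zero]
  -- key variational inequality
  have hkey : ∀ d : Fin n → ℝ,
      0 ≤ (∑ i, (xstar i - y i + Wpmᵀ.mulVec s i) * d i) + ∑ j, |W₀.mulVec d j| := by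
    intro d
    set v := W.mulVec d with hv
    have hgd : (∑ i, (xstar i - y i + Wpmᵀ.mulVec s i) * d i)
        = (∑ i, (xstar i - y i) * d i) + ∑ i, Wpmᵀ.mulVec s i * d i := by
      rw [← Finset.sum_add_distrib]
      exact Finset.sum_congr rfl fun i _ => by ring
    have hstep : ∀ t : ℝ, 0 < t →
        (∀ j, W.mulVec xstar j ≠ 0 → t * |v j| < |W.mulVec xstar j|) →
        0 ≤ ((∑ i, (xstar i - y i + Wpmᵀ.mulVec s i) * d i) + ∑ j, |W₀.mulVec d j|)
          + t / 2 * ∑ i, d i ^ 2 := by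
      intro t ht htj
      have h1 := hmin (xstar + t • d)
      have hq : ∑ i, ((xstar + t • d) i - y i)^2
          = (∑ i, (xstar i - y i)^2) + (2*t) * (∑ i, (xstar i - y i) * d i)
            + t^2 * ∑ i, d i ^ 2 := by
        rw [Finset.mul_sum, Finset.mul_sum, ← Finset.sum_add_distrib, ← Finset.sum_add_distrib]
        refine Finset.sum_congr rfl fun i _ => ?_
        simp only [Pi.add_apply, Pi.smul_apply, smul_eq_mul]
        ring
      have hmv : ∀ j, W.mulVec (xstar + t • d) j = W.mulVec xstar j + t * v j := by
        intro j
        rw [Matrix.mulVec_add, Matrix.mulVec_smul]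
        simp [hv]
      have hsplit : (∑ j, if W.mulVec xstar j = 0 then |v j|
            else Real.sign (W.mulVec xstar j) * v j)
          = (∑ j, |W₀.mulVec d j|) + ∑ i, Wpmᵀ.mulVec s i * d i := by
        rw [Finset.sum_ite]
        congr 1
        · rw [Finset.sum_subtype (p := fun j => W.mulVec xstar j = 0)
            (Finset.univ.filter fun j => W.mulVec xstar j = 0)
            (fun x => by simp) (fun j => |v j|)]
          exact Finset.sum_congr rfl fun j _ => by rw [hW₀v d j, hv]
        · rw [Finset.sum_subtype (p := fun j => W.mulVec xstar j ≠ 0)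
            (Finset.univ.filter fun j => ¬ W.mulVec xstar j = 0)
            (fun x => by simp) (fun j => Real.sign (W.mulVec xstar j) * v j)]
          have hrhs : (∑ i, Wpmᵀ.mulVec s i * d i)
              = ∑ j : {j : Fin k // W.mulVec xstar j ≠ 0}, s j * Wpm.mulVec d j := by
            simp only [Matrix.mulVec, dotProduct, Matrix.transpose_apply,
              Finset.sum_mul, Finset.mul_sum]
            rw [Finset.sum_comm]
            exact Finset.sum_congr rfl fun j _ => Finset.sum_congr rfl fun i _ => by change Wpm j i * _ * _ = _; ring
          rw [hrhs]
          refine Finset.sum_congr rfl fun j _ => ?_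
          rw [hs j, hWpmv d j, hv]
      have habs : ∑ j, |W.mulVec (xstar + t • d) j|
          = (∑ j, |W.mulVec xstar j|)
            + t * ((∑ j, |W₀.mulVec d j|) + ∑ i, Wpmᵀ.mulVec s i * d i) := by
        rw [← hsplit, Finset.mul_sum, ← Finset.sum_add_distrib]
        refine Finset.sum_congr rfl fun j _ => ?_
        rw [hmv j, aux_abs _ _ _ ht (htj j)]
      rw [hq, habs] at h1
      rw [hgd]
      have h2 : 0 ≤ t * (((∑ i, (xstar i - y i) * d i) + ∑ i, Wpmᵀ.mulVec s i * d i)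
          + (∑ j, |W₀.mulVec d j|) + t / 2 * ∑ i, d i ^ 2) := by nlinarith [h1]
      have := (mul_nonneg_iff_of_pos_left ht).mp h2
      linarith
    by_contra hcon
    push_neg at hcon
    set A := (∑ i, (xstar i - y i + Wpmᵀ.mulVec s i) * d i) + ∑ j, |W₀.mulVec d j| with hA
    set C := ∑ i, d i ^ 2 with hC
    have hCnn : 0 ≤ C := Finset.sum_nonneg fun i _ => sq_nonneg _
    obtain ⟨t₂, ht₂, ht₂j⟩ := aux_exists_pos
      (fun j : Fin k => if W.mulVec xstar j = 0 then 1
        else |W.mulVec xstar j| / (2 * (|v j| + 1)))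
      (by
        intro j
        split_ifs with h
        · exact one_pos
        · have : 0 < |W.mulVec xstar j| := abs_pos.mpr h
          positivity)
    set t : ℝ := min (-A / (C + 1)) t₂ with htdef
    have htpos : 0 < t := lt_min (div_pos (by linarith) (by linarith)) ht₂
    have hsign : ∀ j, W.mulVec xstar j ≠ 0 → t * |v j| < |W.mulVec xstar j| := by
      intro j hj
      have h1 := ht₂j j
      simp only [hj, if_false] at h1
      have h3 : 0 < |W.mulVec xstar j| := abs_pos.mpr hj
      have h4 : (0:ℝ) ≤ |v j| := abs_nonneg _
      have h2 : t * (2 * (|v j| + 1)) ≤ |W.mulVec xstar j| := by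
        rw [← le_div_iff₀ (by positivity)]
        exact le_trans (min_le_right _ _) h1
      nlinarith [mul_nonneg htpos.le h4]
    have h5 := hstep t htpos hsign
    have h6 : t ≤ -A / (C + 1) := min_le_left _ _
    have h7 : t / 2 * C < -A := by
      rw [le_div_iff₀ (by positivity : (0:ℝ) < C + 1)] at h6
      nlinarith [mul_nonneg htpos.le hCnn]
    linarith
  -- apply to d = -(P.mulVec g)
  set g : Fin n → ℝ := fun i => xstar i - y i + Wpmᵀ.mulVec s i with hg
  have hPg : P.mulVec g = 0 := by
    have h0 : W₀.mulVec (-(P.mulVec g)) = 0 := by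
      rw [Matrix.mulVec_neg, Matrix.mulVec_mulVec, hW₀P, Matrix.zero_mulVec, neg_zero]
    have h1 := hkey (-(P.mulVec g))
    rw [h0] at h1
    simp only [abs_zero, Pi.zero_apply, Finset.sum_const_zero, add_zero] at h1
    have h2 : (∑ i, g i * (-(P.mulVec g)) i) = -(g ⬝ᵥ P.mulVec g) := by
      simp only [Pi.neg_apply, dotProduct, mul_neg, Finset.sum_neg_distrib]
    have h3 : g ⬝ᵥ P.mulVec g = (P.mulVec g) ⬝ᵥ (P.mulVec g) := by
      conv_lhs => rw [← hPP, ← Matrix.mulVec_mulVec, Matrix.dotProduct_mulVec,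
        ← Matrix.mulVec_transpose, hPT]
    have h4 : (P.mulVec g) ⬝ᵥ (P.mulVec g) ≤ 0 := by
      have : (∑ i, g i * (-(P.mulVec g)) i) = -((P.mulVec g) ⬝ᵥ (P.mulVec g)) := by
        rw [h2, h3]
      rw [this] at h1
      linarith
    have h5 : ∀ i, P.mulVec g i = 0 := by
      intro i
      have hsum : (∑ i, (P.mulVec g i) * (P.mulVec g i)) = 0 := by
        have : 0 ≤ (P.mulVec g) ⬝ᵥ (P.mulVec g) :=
          Finset.sum_nonneg fun i _ => mul_self_nonneg _
        have := le_antisymm h4 this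
        simpa [dotProduct] using this
      have := (Finset.sum_eq_zero_iff_of_nonneg
        (fun i _ => mul_self_nonneg (P.mulVec g i))).mp hsum i (Finset.mem_univ i)
      exact mul_self_eq_zero.mp this
    exact funext h5
  have hyz : y - Wpmᵀ.mulVec s = xstar - g := by
    funext i
    simp only [Pi.sub_apply, hg]
    ring
  rw [hyz, Matrix.mulVec_sub, hPx, hPg, sub_zero]
end

section
/- Let W₀(t) be a differentiable full-row-rank matrix path and P(t) = I − W₀(t)⁺ W₀(t) the projector onto its null space. Then for a fixed vector q, the derivative of x(t) = P(t) q satisfies x′ = −(W₀⁺ W₀′ P + (W₀⁺ W₀′ P)ᵀ) q. -/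
open Matrix

section helpers

attribute [local instance] Matrix.linftyOpNormedAddCommGroup Matrix.linftyOpNormedSpace
  Matrix.linftyOpNormedRing Matrix.linftyOpNormedAlgebra

variable {k : ℕ}

lemma hasDerivAt_matrix_of_entries {f : ℝ → Matrix (Fin k) (Fin k) ℝ}
    {f' : Matrix (Fin k) (Fin k) ℝ} {t : ℝ}
    (h : ∀ i j, HasDerivAt (fun u => f u i j) (f' i j) t) :
    HasDerivAt f f' t := by
  have hg : HasDerivAt (fun u => (fun i j => f u i j : Fin k → Fin k → ℝ))
      (fun i j => f' i j) t := by
    rw [hasDerivAt_pi]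
    intro i
    rw [hasDerivAt_pi]
    exact h i
  let e : (Fin k → Fin k → ℝ) →ₗ[ℝ] Matrix (Fin k) (Fin k) ℝ :=
    { toFun := Matrix.of, map_add' := fun _ _ => rfl, map_smul' := fun _ _ => rfl }
  let e' : (Fin k → Fin k → ℝ) →L[ℝ] Matrix (Fin k) (Fin k) ℝ :=
    { e with cont := e.continuous_of_finiteDimensional }
  exact e'.hasFDerivAt.comp_hasDerivAt t hg

lemma hasDerivAt_entries_of_matrix {f : ℝ → Matrix (Fin k) (Fin k) ℝ}
    {f' : Matrix (Fin k) (Fin k) ℝ} {t : ℝ} (h : HasDerivAt f f' t) (i j : Fin k) :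
    HasDerivAt (fun u => f u i j) (f' i j) t := by
  let e : Matrix (Fin k) (Fin k) ℝ →ₗ[ℝ] ℝ :=
    { toFun := fun M => M i j, map_add' := fun _ _ => rfl, map_smul' := fun _ _ => rfl }
  let e' : Matrix (Fin k) (Fin k) ℝ →L[ℝ] ℝ :=
    { e with cont := e.continuous_of_finiteDimensional }
  exact e'.hasFDerivAt.comp_hasDerivAt t h

lemma hasDerivAt_matrix_inv {G : ℝ → Matrix (Fin k) (Fin k) ℝ}
    {G' : Matrix (Fin k) (Fin k) ℝ} {t : ℝ} (hu : IsUnit (G t))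
    (h : ∀ i j, HasDerivAt (fun u => G u i j) (G' i j) t) :
    ∀ i j, HasDerivAt (fun u => (G u)⁻¹ i j)
      ((-((G t)⁻¹ * G' * (G t)⁻¹)) i j) t := by
  obtain ⟨u, hu⟩ := hu
  have hG : HasDerivAt G G' t := hasDerivAt_matrix_of_entries h
  have hinv := (hasFDerivAt_ringInverse (𝕜 := ℝ) u)
  rw [hu] at hinv
  have hcomp := hinv.comp_hasDerivAt t hG
  have hR : HasDerivAt (fun v => Ring.inverse (G v)) (-((G t)⁻¹ * G' * (G t)⁻¹)) t := by
    refine hcomp.congr_deriv ?_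
    simp [ContinuousLinearMap.mulLeftRight_apply, ← hu, ← Matrix.coe_units_inv,
      Matrix.nonsing_inv_eq_ringInverse]
  intro i j
  exact (hasDerivAt_entries_of_matrix hR i j).congr_of_eventuallyEq
    (Filter.Eventually.of_forall fun v => by
      simp only [Matrix.nonsing_inv_eq_ringInverse])

end helpers

lemma hasDerivAt_entry_mul {a b c : ℕ} {A : ℝ → Matrix (Fin a) (Fin b) ℝ}
    {B : ℝ → Matrix (Fin b) (Fin c) ℝ} {A' : Matrix (Fin a) (Fin b) ℝ}
    {B' : Matrix (Fin b) (Fin c) ℝ} {t : ℝ}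
    (hA : ∀ i j, HasDerivAt (fun u => A u i j) (A' i j) t)
    (hB : ∀ i j, HasDerivAt (fun u => B u i j) (B' i j) t) :
    ∀ i j, HasDerivAt (fun u => (A u * B u) i j) ((A' * B t + A t * B') i j) t := by
  intro i j
  simp only [Matrix.mul_apply, Matrix.add_apply]
  rw [← Finset.sum_add_distrib]
  exact HasDerivAt.fun_sum fun l _ => (hA i l).mul (hB l j)

lemma isUnit_of_rank_eq {k : ℕ} (A : Matrix (Fin k) (Fin k) ℝ) (h : A.rank = k) :
    IsUnit A := by
  rw [← Matrix.mulVec_surjective_iff_isUnit]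
  have : LinearMap.range A.mulVecLin = ⊤ := by
    apply Submodule.eq_top_of_finrank_eq
    rw [← Matrix.rank, h]
    simp [Module.finrank_pi]
  intro v
  have := this ▸ LinearMap.mem_range (f := A.mulVecLin) (x := v)
  exact (this.symm.mpr Submodule.mem_top)

/-- Differentiation of a null-space projection (Golub–Pereyra): if `W₀(t)` is a
differentiable full-row-rank matrix path, `W₀⁺ = W₀ᵀ(W₀W₀ᵀ)⁻¹`,
`P(t) = I − W₀(t)⁺ W₀(t)`, and `q` is a fixed vector, then
`x(t) = P(t) q` satisfies `x′ = −(W₀⁺ W₀′ P + (W₀⁺ W₀′ P)ᵀ) q`. -/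
theorem stmt_11 (n k₀ : ℕ) (q : Fin n → ℝ)
    (W₀ : ℝ → Matrix (Fin k₀) (Fin n) ℝ) (W₀' : ℝ → Matrix (Fin k₀) (Fin n) ℝ)
    (hrank : ∀ t, (W₀ t).rank = k₀)
    (hderiv : ∀ t i j, HasDerivAt (fun u => W₀ u i j) (W₀' t i j) t)
    (pinv : ℝ → Matrix (Fin n) (Fin k₀) ℝ)
    (hpinv : ∀ t, pinv t = (W₀ t)ᵀ * (W₀ t * (W₀ t)ᵀ)⁻¹)
    (P : ℝ → Matrix (Fin n) (Fin n) ℝ)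
    (hP : ∀ t, P t = 1 - pinv t * W₀ t)
    (x : ℝ → Fin n → ℝ) (hx : ∀ t, x t = (P t).mulVec q) :
    ∀ t i, HasDerivAt (fun u => x u i)
      ((-(pinv t * W₀' t * P t + (pinv t * W₀' t * P t)ᵀ)).mulVec q i) t := by
  intro t i
  set W := W₀ t with hW
  set W' := W₀' t with hW'
  set Gi := (W * Wᵀ)⁻¹ with hGi
  -- derivatives of entries of Wᵀ
  have hWT : ∀ (i : Fin n) (j : Fin k₀),
      HasDerivAt (fun u => (W₀ u)ᵀ i j) (W'ᵀ i j) t := fun i j => hderiv t j i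
  -- derivative of G = W Wᵀ
  have hGe : ∀ (i j : Fin k₀),
      HasDerivAt (fun u => (W₀ u * (W₀ u)ᵀ) i j) ((W' * Wᵀ + W * W'ᵀ) i j) t :=
    hasDerivAt_entry_mul (hderiv t) hWT
  have hGu : IsUnit (W * Wᵀ) := by
    apply isUnit_of_rank_eq
    rw [Matrix.rank_self_mul_transpose, hrank]
  -- derivative of G⁻¹
  have hGinv : ∀ (i j : Fin k₀),
      HasDerivAt (fun u => (W₀ u * (W₀ u)ᵀ)⁻¹ i j)
        ((-(Gi * (W' * Wᵀ + W * W'ᵀ) * Gi)) i j) t :=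
    hasDerivAt_matrix_inv hGu hGe
  -- derivative of pinv = Wᵀ G⁻¹
  have hpd : ∀ (i : Fin n) (j : Fin k₀),
      HasDerivAt (fun u => pinv u i j)
        ((W'ᵀ * Gi + Wᵀ * (-(Gi * (W' * Wᵀ + W * W'ᵀ) * Gi))) i j) t := by
    intro i j
    have := hasDerivAt_entry_mul hWT hGinv i j
    exact this.congr_of_eventuallyEq
      (Filter.Eventually.of_forall fun v => by simp only [hpinv])
  -- derivative of M = pinv * W₀
  have hMd : ∀ (i j : Fin n),
      HasDerivAt (fun u => (pinv u * W₀ u) i j)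
        (((W'ᵀ * Gi + Wᵀ * (-(Gi * (W' * Wᵀ + W * W'ᵀ) * Gi))) * W
          + Wᵀ * Gi * W') i j) t := by
    intro i j
    have := hasDerivAt_entry_mul hpd (hderiv t) i j
    rw [hpinv] at this
    exact this
  set Md := (W'ᵀ * Gi + Wᵀ * (-(Gi * (W' * Wᵀ + W * W'ᵀ) * Gi))) * W + Wᵀ * Gi * W'
    with hMddef
  -- derivative of entries of P
  have hPd : ∀ (i j : Fin n),
      HasDerivAt (fun u => P u i j) ((-Md) i j) t := by
    intro i j
    have h1 : HasDerivAt (fun u => (1 : Matrix (Fin n) (Fin n) ℝ) i j - (pinv u * W₀ u) i j)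
        (0 - Md i j) t := (hasDerivAt_const t _).sub (hMd i j)
    simp only [zero_sub] at h1
    exact (h1.congr_of_eventuallyEq
      (Filter.Eventually.of_forall fun v => by rw [hP]; simp [Matrix.sub_apply])).congr_deriv
      (by simp)
  -- derivative of x i
  have hxd : HasDerivAt (fun u => x u i) (∑ j, (-Md) i j * q j) t := by
    have h2 : HasDerivAt (fun u => ∑ j, P u i j * q j) (∑ j, (-Md) i j * q j) t :=
      HasDerivAt.fun_sum fun j _ => (hPd i j).mul_const (q j)
    exact h2.congr_of_eventuallyEq
      (Filter.Eventually.of_forall fun v => by simp only [hx, Matrix.mulVec, dotProduct])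
  convert hxd using 1
  rw [Matrix.mulVec, dotProduct]
  apply Finset.sum_congr rfl
  intro j _
  congr 1
  -- the key matrix identity
  have hGsym : Giᵀ = Gi := by
    rw [hGi, Matrix.transpose_nonsing_inv, Matrix.transpose_mul, Matrix.transpose_transpose]
  have key : -(pinv t * W₀' t * P t + (pinv t * W₀' t * P t)ᵀ) = -Md := by
    rw [hP, hpinv, hMddef, ← hW, ← hW', ← hGi]
    simp only [Matrix.transpose_mul, Matrix.transpose_sub, Matrix.transpose_one,
      Matrix.transpose_transpose, hGsym, Matrix.mul_add, Matrix.add_mul, Matrix.mul_sub,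
      Matrix.sub_mul, Matrix.mul_neg, Matrix.neg_mul, Matrix.mul_one, Matrix.one_mul,
      Matrix.mul_assoc, neg_neg]
    abel
  rw [key]
end
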